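/- arXiv:1907.00284 — 2 statements merged into one kernel-verified Lean document; each statement's English description precedes it below -/
import Mathlib

section
/- Suppose κ is a cardinal, G is a function assigning a graph to each ordinal, j : V → M is an elementary embedding with critical point κ into a transitive class M, and j(G)(κ+1) = G(κ+1). If for all ordinals α ≤ α' there is a graph homomorphism G(α') → G(α), then there is a graph homomorphism from G(κ) to G(κ+1), namely the composition of a homomorphism h : j(G)(j(κ)) → G(κ+1) existing in M with the restriction j↾G(κ) : G(κ) → j(G)(j(κ)). -/
open FirstOrder

namespace WVP

/-- The type of relation symbols of the language of set theory: a single binary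
relation (membership). -/
inductive memRel : ℕ → Type
  | mem : memRel 2

/-- The first-order language with a single binary relation symbol `∈`. -/
def ZFLang : FirstOrder.Language := ⟨fun _ => Empty, memRel⟩

instance : ZFLang.Structure ZFSet where
  funMap := fun f _ => f.elim
  RelMap := fun r x => match r with | .mem => x 0 ∈ x 1

instance (M : Set ZFSet) : ZFLang.Structure M where
  funMap := fun f _ => f.elim
  RelMap := fun r x => match r with | .mem => (x 0 : ZFSet) ∈ (x 1 : ZFSet)

/-- `M` is a transitive class of ZF-sets. -/
def ClassTransitive (M : Set ZFSet) : Prop := ∀ x ∈ M, ∀ y ∈ x, y ∈ M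

/-- `j : V → M` is an elementary embedding of the set-theoretic universe into the
class `M` (elementary with respect to the language of set theory). -/
def Elementary (M : Set ZFSet) (j : ZFSet → ZFSet) : Prop :=
  ∃ hj : ∀ x, j x ∈ M, ∀ (n : ℕ) (φ : ZFLang.Formula (Fin n)) (v : Fin n → ZFSet),
    φ.Realize v ↔ φ.Realize fun i => (⟨j (v i), hj (v i)⟩ : M)

attribute [local instance] Classical.propDecidable

noncomputable instance (n : ℕ) (F : (Fin n → ZFSet) → ZFSet) : ZFSet.Definable n F :=
  Classical.allZFSetDefinable F

/-- `x` is a (von Neumann) ordinal: a transitive set all of whose elements are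
transitive. -/
def IsOrd (x : ZFSet) : Prop := x.IsTransitive ∧ ∀ y ∈ x, ZFSet.IsTransitive y

/-- Ordinal successor `κ + 1 = κ ∪ {κ}`. -/
def succZ (x : ZFSet) : ZFSet := insert x x

/-- The cumulative hierarchy: `Vlev β = ⋃_{α ∈ β} 𝒫(Vlev α)`, so that for an
ordinal `β`, `Vlev β` is the set `V_β` of all sets of rank less than `β`. -/
noncomputable def Vlev : ZFSet → ZFSet :=
  ZFSet.mem_wf.fix fun β IH =>
    ZFSet.sUnion (ZFSet.image
      (fun α => if h : α ∈ β then ZFSet.powerset (IH α h) else ∅) β)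

/-- `κ` is `β`-`C`-strong: there are a transitive class `M` and an elementary
embedding `j : V → M` with critical point `κ` such that `V_β ⊆ M` and
`j(C ∩ V_β) ∩ V_β = C ∩ V_β`. -/
def BetaCStrong (κ β C : ZFSet) : Prop :=
  ∃ (M : Set ZFSet) (j : ZFSet → ZFSet), ClassTransitive M ∧ Elementary M j ∧
    IsOrd κ ∧ j κ ≠ κ ∧ (∀ α, IsOrd α → α ∈ κ → j α = α) ∧
    (∀ x, x ∈ Vlev β → x ∈ M) ∧
    j (C ∩ Vlev β) ∩ Vlev β = C ∩ Vlev β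

/-- There is a graph homomorphism from the graph `(g, e)` to the graph `(g', e')`. -/
def GraphHom (g e g' e' : ZFSet) : Prop :=
  ∃ f : ZFSet → ZFSet, (∀ x ∈ g, f x ∈ g') ∧
    ∀ x y : ZFSet, ZFSet.pair x y ∈ e → ZFSet.pair (f x) (f y) ∈ e'

/-- `(g, e)` is a graph: `e` is a set of (Kuratowski-coded) pairs from `g`. -/
def IsGraph (g e : ZFSet) : Prop := ∀ z ∈ e, ∃ x ∈ g, ∃ y ∈ g, z = ZFSet.pair x y

/-- `g` has cardinality less than `δ`: `g` injects into some element of `δ`. -/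
def SmallerThan (g δ : ZFSet) : Prop :=
  ∃ γ ∈ δ, ∃ f : ZFSet → ZFSet,
    (∀ x ∈ g, f x ∈ γ) ∧ ∀ x ∈ g, ∀ y ∈ g, f x = f y → x = y

/-- `κ` is a cardinal: an ordinal not surjected onto by any smaller ordinal. -/
def IsCard (κ : ZFSet) : Prop :=
  IsOrd κ ∧ ∀ γ ∈ κ, ¬ ∃ f : ZFSet → ZFSet,
    (∀ x ∈ γ, f x ∈ κ) ∧ ∀ y ∈ κ, ∃ x ∈ γ, f x = y

/-- The restriction `G ∩ V_β`-style set coding of the class function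
`α ↦ ⟨α, (gV α, gE α)⟩` to the ordinals in `β`. -/
noncomputable def Gres (gV gE : ZFSet → ZFSet) (β : ZFSet) : ZFSet :=
  ZFSet.image (fun α => ZFSet.pair α (ZFSet.pair (gV α) (gE α))) β

/-! ### Auxiliary infrastructure -/

section Ordinals

theorem mem_succZ {z x : ZFSet} : z ∈ succZ x ↔ z = x ∨ z ∈ x := ZFSet.mem_insert_iff

theorem isOrd_of_mem {x y : ZFSet} (h : IsOrd x) (hyx : y ∈ x) : IsOrd y :=
  ⟨h.2 y hyx, fun z hz => h.2 z (h.1 y hyx hz)⟩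

theorem isOrd_succZ {x : ZFSet} (h : IsOrd x) : IsOrd (succZ x) := by
  constructor
  · intro y hy
    rcases mem_succZ.1 hy with rfl | hy
    · exact fun z hz => mem_succZ.2 (Or.inr hz)
    · exact fun z hz => mem_succZ.2 (Or.inr (h.1 y hy hz))
  · intro y hy
    rcases mem_succZ.1 hy with rfl | hy
    · exact h.1
    · exact h.2 y hy

theorem ord_tri : ∀ x : ZFSet, IsOrd x → ∀ y : ZFSet, IsOrd y → x ∈ y ∨ x = y ∨ y ∈ x := by
  intro x
  induction x using ZFSet.inductionOn with
  | _ x ihx =>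
  intro hx y
  induction y using ZFSet.inductionOn with
  | _ y ihy =>
  intro hy
  by_cases hxy : x ∈ y
  · exact Or.inl hxy
  by_cases hyx : y ∈ x
  · exact Or.inr (Or.inr hyx)
  refine Or.inr (Or.inl (ZFSet.ext fun z => ⟨?_, ?_⟩))
  · intro hz
    rcases ihx z hz (isOrd_of_mem hx hz) y hy with h | h | h
    · exact h
    · exact absurd (h ▸ hz) hyx
    · exact absurd (hx.1 z hz h) hyx
  · intro hz
    rcases ihy z hz (isOrd_of_mem hy hz) with h | h | h
    · exact absurd (hy.1 z hz h) hxy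
    · exact absurd (h ▸ hz) hxy
    · exact h

end Ordinals
section Formulas

open FirstOrder.Language

/-- The membership relation symbol. -/
def memSym : ZFLang.Relations 2 := memRel.mem

variable {α : Type} {n : ℕ}

/-- Lift a variable designator along one extra bound variable. -/
def lift1 : α ⊕ Fin n → α ⊕ Fin (n + 1) := Sum.map id Fin.castSucc

/-- Atomic membership formula between two variables. -/
def tmem (t u : α ⊕ Fin n) : ZFLang.BoundedFormula α n :=
  memSym.boundedFormula₂ (Term.var t) (Term.var u)

/-- Atomic equality formula between two variables. -/
def teq (t u : α ⊕ Fin n) : ZFLang.BoundedFormula α n :=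
  Term.bdEqual (Term.var t) (Term.var u)

/-- `p = {a, b}` as a formula. -/
def upairB (p a b : α ⊕ Fin n) : ZFLang.BoundedFormula α n :=
  ∀' ((tmem (Sum.inr (Fin.last n)) (lift1 p)) ⇔
      ((teq (Sum.inr (Fin.last n)) (lift1 a)) ⊔ (teq (Sum.inr (Fin.last n)) (lift1 b))))

/-- `p = ⟨a, b⟩` (Kuratowski) as a formula. -/
def kPairB (p a b : α ⊕ Fin n) : ZFLang.BoundedFormula α n :=
  ∃' ∃' ((upairB (lift1 (lift1 p)) (Sum.inr (Fin.castSucc (Fin.last n))) (Sum.inr (Fin.last (n+1))))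
      ⊓ ((upairB (Sum.inr (Fin.castSucc (Fin.last n))) (lift1 (lift1 a)) (lift1 (lift1 a)))
      ⊓ (upairB (Sum.inr (Fin.last (n+1))) (lift1 (lift1 a)) (lift1 (lift1 b)))))

/-- `⟨x, y⟩ ∈ E` as a formula. -/
def pMemB (x y E : α ⊕ Fin n) : ZFLang.BoundedFormula α n :=
  ∃' ((tmem (Sum.inr (Fin.last n)) (lift1 E)) ⊓
      (kPairB (Sum.inr (Fin.last n)) (lift1 x) (lift1 y)))

/-- `F` maps every vertex of `gv` to some vertex of `gv'`. -/
def vertB (F gv gv' : α ⊕ Fin n) : ZFLang.BoundedFormula α n :=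
  ∀' ((tmem (Sum.inr (Fin.last n)) (lift1 gv)) ⟹
    ∃' ((tmem (Sum.inr (Fin.last (n+1))) (lift1 (lift1 gv'))) ⊓
      (pMemB (Sum.inr (Fin.castSucc (Fin.last n))) (Sum.inr (Fin.last (n+1))) (lift1 (lift1 F)))))

/-- `F` carries edges of `ge` to edges of `ge'`. -/
def edgeB (F ge ge' : α ⊕ Fin n) : ZFLang.BoundedFormula α n :=
  ∀' ∀' ∀' ∀'
    ((pMemB (Sum.inr ((Fin.last n).castSucc.castSucc.castSucc))
            (Sum.inr ((Fin.last (n+2)).castSucc))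
            (lift1 (lift1 (lift1 (lift1 F))))) ⟹
    ((pMemB (Sum.inr ((Fin.last (n+1)).castSucc.castSucc))
            (Sum.inr (Fin.last (n+3)))
            (lift1 (lift1 (lift1 (lift1 F))))) ⟹
    ((pMemB (Sum.inr ((Fin.last n).castSucc.castSucc.castSucc))
            (Sum.inr ((Fin.last (n+1)).castSucc.castSucc))
            (lift1 (lift1 (lift1 (lift1 ge))))) ⟹
     (pMemB (Sum.inr ((Fin.last (n+2)).castSucc))
            (Sum.inr (Fin.last (n+3)))
            (lift1 (lift1 (lift1 (lift1 ge'))))))))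

/-- There is a graph homomorphism `(gv, ge) → (gv', ge')`. -/
def homB (gv ge gv' ge' : α ⊕ Fin n) : ZFLang.BoundedFormula α n :=
  ∃' ((vertB (Sum.inr (Fin.last n)) (lift1 gv) (lift1 gv')) ⊓
      (edgeB (Sum.inr (Fin.last n)) (lift1 ge) (lift1 ge')))

/-- `x` is a transitive set. -/
def transB (x : α ⊕ Fin n) : ZFLang.BoundedFormula α n :=
  ∀' ∀' ((tmem (Sum.inr (Fin.castSucc (Fin.last n))) (lift1 (lift1 x))) ⟹
    ((tmem (Sum.inr (Fin.last (n+1))) (Sum.inr (Fin.castSucc (Fin.last n)))) ⟹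
     (tmem (Sum.inr (Fin.last (n+1))) (lift1 (lift1 x)))))

/-- `x` is an ordinal. -/
def ordB (x : α ⊕ Fin n) : ZFLang.BoundedFormula α n :=
  (transB x) ⊓ (∀' ((tmem (Sum.inr (Fin.last n)) (lift1 x)) ⟹ (transB (Sum.inr (Fin.last n)))))

/-- `(gv, ge)` is a graph. -/
def graphB (gv ge : α ⊕ Fin n) : ZFLang.BoundedFormula α n :=
  ∀' ((tmem (Sum.inr (Fin.last n)) (lift1 ge)) ⟹
    ∃' ∃' ((tmem (Sum.inr (Fin.castSucc (Fin.last (n+1)))) (lift1 (lift1 (lift1 gv)))) ⊓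
      ((tmem (Sum.inr (Fin.last (n+2))) (lift1 (lift1 (lift1 gv)))) ⊓
       (kPairB (Sum.inr ((Fin.last n).castSucc.castSucc))
               (Sum.inr (Fin.castSucc (Fin.last (n+1))))
               (Sum.inr (Fin.last (n+2)))))))

/-- Free-variable membership formula. -/
def memF : ZFLang.Formula (Fin 2) := tmem (Sum.inl 0) (Sum.inl 1)

/-- Free-variable Kuratowski-pair formula. -/
def kPairF : ZFLang.Formula (Fin 3) := kPairB (Sum.inl 0) (Sum.inl 1) (Sum.inl 2)

/-- Sentence: any two sets have an unordered pair. -/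
def upairclF : ZFLang.Formula (Fin 0) :=
  ∀' ∀' ∃' (upairB (Sum.inr (Fin.last 2)) (Sum.inr ((Fin.last 0).castSucc.castSucc))
              (Sum.inr ((Fin.last 1).castSucc)))

/-- Free-variable ordinal formula. -/
def ordF : ZFLang.Formula (Fin 1) := ordB (Sum.inl 0)

/-- Free-variable graph formula. -/
def graphF : ZFLang.Formula (Fin 2) := graphB (Sum.inl 0) (Sum.inl 1)

/-- Designators for the ten bound variables of `SF`. -/
def d0 : Fin 1 ⊕ Fin 10 := Sum.inr ((Fin.last 0).castSucc.castSucc.castSucc.castSucc.castSucc.castSucc.castSucc.castSucc.castSucc)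
def d1 : Fin 1 ⊕ Fin 10 := Sum.inr ((Fin.last 1).castSucc.castSucc.castSucc.castSucc.castSucc.castSucc.castSucc.castSucc)
def d2 : Fin 1 ⊕ Fin 10 := Sum.inr ((Fin.last 2).castSucc.castSucc.castSucc.castSucc.castSucc.castSucc.castSucc)
def d3 : Fin 1 ⊕ Fin 10 := Sum.inr ((Fin.last 3).castSucc.castSucc.castSucc.castSucc.castSucc.castSucc)
def d4 : Fin 1 ⊕ Fin 10 := Sum.inr ((Fin.last 4).castSucc.castSucc.castSucc.castSucc.castSucc)
def d5 : Fin 1 ⊕ Fin 10 := Sum.inr ((Fin.last 5).castSucc.castSucc.castSucc.castSucc)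
def d6 : Fin 1 ⊕ Fin 10 := Sum.inr ((Fin.last 6).castSucc.castSucc.castSucc)
def d7 : Fin 1 ⊕ Fin 10 := Sum.inr ((Fin.last 7).castSucc.castSucc)
def d8 : Fin 1 ⊕ Fin 10 := Sum.inr ((Fin.last 8).castSucc)
def d9 : Fin 1 ⊕ Fin 10 := Sum.inr (Fin.last 9)

/-- The main transferred statement about the coherent sequence `R`. -/
def SF : ZFLang.Formula (Fin 1) :=
  ∀' ∀' ∀' ∀' ∀' ∀' ∀' ∀' ∀' ∀'
    ((tmem d0 (Sum.inl 0)) ⟹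
    ((tmem d1 (Sum.inl 0)) ⟹
    ((kPairB d0 d2 d3) ⟹
    ((kPairB d3 d4 d5) ⟹
    ((kPairB d1 d6 d7) ⟹
    ((kPairB d7 d8 d9) ⟹
    (((tmem d6 d2) ⊔ (teq d6 d2)) ⟹
     (homB d4 d5 d8 d9))))))))

end Formulas
section Semantics

open FirstOrder.Language

variable {S : Type*} [ZFLang.Structure S]

/-- The semantic membership relation of a `ZFLang`-structure. -/
def memS (a b : S) : Prop := Structure.RelMap memSym ![a, b]

def uPairS (p a b : S) : Prop := ∀ u : S, memS u p ↔ (u = a ∨ u = b)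

def kPairS (p a b : S) : Prop := ∃ c d : S, uPairS p c d ∧ (uPairS c a a ∧ uPairS d a b)

def pMemS (x y E : S) : Prop := ∃ s : S, memS s E ∧ kPairS s x y

def vertS (F gv gv' : S) : Prop := ∀ x : S, memS x gv → ∃ y : S, memS y gv' ∧ pMemS x y F

def edgeS (F ge ge' : S) : Prop :=
  ∀ x y u w : S, pMemS x u F → pMemS y w F → pMemS x y ge → pMemS u w ge'

def homS (gv ge gv' ge' : S) : Prop := ∃ F : S, vertS F gv gv' ∧ edgeS F ge ge'

def transS (x : S) : Prop := ∀ a b : S, memS a x → memS b a → memS b x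

def ordS (x : S) : Prop := transS x ∧ ∀ y : S, memS y x → transS y

def graphS (gv ge : S) : Prop :=
  ∀ z : S, memS z ge → ∃ x y : S, memS x gv ∧ (memS y gv ∧ kPairS z x y)

def SS (R : S) : Prop :=
  ∀ p q a w gv ge a' w' gv' ge' : S, memS p R → memS q R →
    kPairS p a w → kPairS w gv ge → kPairS q a' w' → kPairS w' gv' ge' →
    (memS a' a ∨ a' = a) → homS gv ge gv' ge'

variable {α : Type} {n : ℕ}

@[simp] theorem elim_snoc_lift1 {v : α → S} {xs : Fin n → S} {u : S} (p : α ⊕ Fin n) :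
    Sum.elim v (Fin.snoc xs u) (lift1 p) = Sum.elim v xs p := by
  cases p <;> simp [lift1]

@[simp] theorem snoc_zero_succ {γ : Sort*} {m : ℕ} (p : Fin (m+1) → γ) (x : γ) :
    (Fin.snoc p x : Fin (m+2) → γ) 0 = p 0 := by
  have h : ((0 : Fin (m+1)).castSucc) = (0 : Fin (m+2)) := rfl
  rw [← h, Fin.snoc_castSucc]

@[simp] theorem snoc_zero_one {γ : Sort*} (p : Fin 0 → γ) (x : γ) :
    (Fin.snoc p x : Fin 1 → γ) 0 = x := by
  simp [Fin.snoc]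

@[simp] theorem realize_tmem {v : α → S} {xs : Fin n → S} {t u : α ⊕ Fin n} :
    (tmem t u).Realize v xs ↔ memS (Sum.elim v xs t) (Sum.elim v xs u) := by
  simp [tmem, memS]

@[simp] theorem realize_teq {v : α → S} {xs : Fin n → S} {t u : α ⊕ Fin n} :
    (teq t u).Realize v xs ↔ Sum.elim v xs t = Sum.elim v xs u := by
  simp [teq]

@[simp] theorem realize_upairB {v : α → S} {xs : Fin n → S} {p a b : α ⊕ Fin n} :
    (upairB p a b).Realize v xs ↔
      uPairS (Sum.elim v xs p) (Sum.elim v xs a) (Sum.elim v xs b) := by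
  simp [upairB, uPairS]

@[simp] theorem realize_kPairB {v : α → S} {xs : Fin n → S} {p a b : α ⊕ Fin n} :
    (kPairB p a b).Realize v xs ↔
      kPairS (Sum.elim v xs p) (Sum.elim v xs a) (Sum.elim v xs b) := by
  simp [kPairB, kPairS]

@[simp] theorem realize_pMemB {v : α → S} {xs : Fin n → S} {x y E : α ⊕ Fin n} :
    (pMemB x y E).Realize v xs ↔
      pMemS (Sum.elim v xs x) (Sum.elim v xs y) (Sum.elim v xs E) := by
  simp [pMemB, pMemS]

@[simp] theorem realize_vertB {v : α → S} {xs : Fin n → S} {F gv gv' : α ⊕ Fin n} :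
    (vertB F gv gv').Realize v xs ↔
      vertS (Sum.elim v xs F) (Sum.elim v xs gv) (Sum.elim v xs gv') := by
  simp [vertB, vertS]

@[simp] theorem realize_edgeB {v : α → S} {xs : Fin n → S} {F ge ge' : α ⊕ Fin n} :
    (edgeB F ge ge').Realize v xs ↔
      edgeS (Sum.elim v xs F) (Sum.elim v xs ge) (Sum.elim v xs ge') := by
  simp [edgeB, edgeS]

@[simp] theorem realize_homB {v : α → S} {xs : Fin n → S} {gv ge gv' ge' : α ⊕ Fin n} :
    (homB gv ge gv' ge').Realize v xs ↔
      homS (Sum.elim v xs gv) (Sum.elim v xs ge) (Sum.elim v xs gv') (Sum.elim v xs ge') := by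
  simp [homB, homS]

@[simp] theorem realize_transB {v : α → S} {xs : Fin n → S} {x : α ⊕ Fin n} :
    (transB x).Realize v xs ↔ transS (Sum.elim v xs x) := by
  simp [transB, transS]

@[simp] theorem realize_ordB {v : α → S} {xs : Fin n → S} {x : α ⊕ Fin n} :
    (ordB x).Realize v xs ↔ ordS (Sum.elim v xs x) := by
  simp [ordB, ordS]

@[simp] theorem realize_graphB {v : α → S} {xs : Fin n → S} {gv ge : α ⊕ Fin n} :
    (graphB gv ge).Realize v xs ↔ graphS (Sum.elim v xs gv) (Sum.elim v xs ge) := by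
  simp [graphB, graphS]

theorem realize_memF {v : Fin 2 → S} : memF.Realize v ↔ memS (v 0) (v 1) := by
  simp [memF, Formula.Realize]

theorem realize_kPairF {v : Fin 3 → S} : kPairF.Realize v ↔ kPairS (v 0) (v 1) (v 2) := by
  simp [kPairF, Formula.Realize]

theorem realize_upairclF {v : Fin 0 → S} :
    upairclF.Realize v ↔ ∀ a b : S, ∃ p : S, uPairS p a b := by
  simp [upairclF, Formula.Realize, Fin.snoc]

theorem realize_ordF {v : Fin 1 → S} : ordF.Realize v ↔ ordS (v 0) := by
  simp [ordF, Formula.Realize]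

theorem realize_graphF {v : Fin 2 → S} : graphF.Realize v ↔ graphS (v 0) (v 1) := by
  simp [graphF, Formula.Realize]

theorem realize_SF {v : Fin 1 → S} : SF.Realize v ↔ SS (v 0) := by
  simp [SF, SS, Formula.Realize, d0, d1, d2, d3, d4, d5, d6, d7, d8, d9, Fin.snoc]

end Semantics
section Bridge

theorem memS_zf {a b : ZFSet} : memS a b ↔ a ∈ b := Iff.rfl

theorem upair_self (a : ZFSet) : ({a, a} : ZFSet) = {a} :=
  ZFSet.ext fun z => by simp [ZFSet.mem_pair]

theorem uPairS_zf {p a b : ZFSet} : uPairS p a b ↔ p = ({a, b} : ZFSet) := by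
  constructor
  · intro h
    exact ZFSet.ext fun z => (memS_zf.symm.trans (h z)).trans ZFSet.mem_pair.symm
  · rintro rfl u
    exact memS_zf.trans ZFSet.mem_pair

theorem kPairS_zf {p a b : ZFSet} : kPairS p a b ↔ p = ZFSet.pair a b := by
  constructor
  · rintro ⟨c, d, h1, h2, h3⟩
    rw [uPairS_zf] at h1 h2 h3
    rw [h1, h2, h3, upair_self, ZFSet.pair]
  · rintro rfl
    exact ⟨{a}, {a, b}, uPairS_zf.2 (by rw [ZFSet.pair]),
      uPairS_zf.2 (upair_self a).symm, uPairS_zf.2 rfl⟩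

theorem pMemS_zf {x y E : ZFSet} : pMemS x y E ↔ ZFSet.pair x y ∈ E := by
  constructor
  · rintro ⟨s, hs, hk⟩
    rw [kPairS_zf] at hk
    rw [← hk]
    exact memS_zf.1 hs
  · intro h
    exact ⟨ZFSet.pair x y, memS_zf.2 h, kPairS_zf.2 rfl⟩

theorem transS_zf {x : ZFSet} : transS x ↔ x.IsTransitive := by
  constructor
  · intro h y hy z hz
    exact h y z (memS_zf.2 hy) (memS_zf.2 hz)
  · intro h a b ha hb
    exact memS_zf.2 (h.mem_trans (memS_zf.1 hb) (memS_zf.1 ha))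

theorem ordS_zf {x : ZFSet} : ordS x ↔ IsOrd x :=
  ⟨fun h => ⟨transS_zf.1 h.1, fun y hy => transS_zf.1 (h.2 y (memS_zf.2 hy))⟩,
   fun h => ⟨transS_zf.2 h.1, fun y hy => transS_zf.2 (h.2 y (memS_zf.1 hy))⟩⟩

theorem graphS_zf {gv ge : ZFSet} : graphS gv ge ↔ IsGraph gv ge := by
  constructor
  · intro h z hz
    obtain ⟨x, y, h1, h2, h3⟩ := h z (memS_zf.2 hz)
    exact ⟨x, memS_zf.1 h1, y, memS_zf.1 h2, kPairS_zf.1 h3⟩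
  · intro h z hz
    obtain ⟨x, hx, y, hy, hzeq⟩ := h z (memS_zf.1 hz)
    exact ⟨x, y, memS_zf.2 hx, memS_zf.2 hy, kPairS_zf.2 hzeq⟩

variable {M : Set ZFSet}

theorem memS_cl {a b : M} : memS a b ↔ (a : ZFSet) ∈ (b : ZFSet) := Iff.rfl

theorem uPairS_cl (hM : ClassTransitive M) {p a b : M} :
    uPairS p a b ↔ (p : ZFSet) = {(a : ZFSet), (b : ZFSet)} := by
  constructor
  · intro h
    refine ZFSet.ext fun z => ⟨fun hz => ?_, fun hz => ?_⟩
    · have hzM : z ∈ M := hM p p.2 z hz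
      rcases (h ⟨z, hzM⟩).1 (memS_cl.2 hz) with h' | h'
      · exact ZFSet.mem_pair.2 (Or.inl (congrArg Subtype.val h'))
      · exact ZFSet.mem_pair.2 (Or.inr (congrArg Subtype.val h'))
    · rcases ZFSet.mem_pair.1 hz with rfl | rfl
      · exact memS_cl.1 ((h a).2 (Or.inl rfl))
      · exact memS_cl.1 ((h b).2 (Or.inr rfl))
  · intro hp u
    rw [memS_cl, hp, ZFSet.mem_pair]
    simp [Subtype.ext_iff]

theorem kPairS_cl (hM : ClassTransitive M)
    (hcl : ∀ a b : ZFSet, a ∈ M → b ∈ M → ({a, b} : ZFSet) ∈ M) {p a b : M} :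
    kPairS p a b ↔ (p : ZFSet) = ZFSet.pair (a : ZFSet) (b : ZFSet) := by
  constructor
  · rintro ⟨c, d, h1, h2, h3⟩
    rw [uPairS_cl hM] at h1 h2 h3
    rw [h1, h2, h3, upair_self, ZFSet.pair]
  · intro hp
    refine ⟨⟨{(a : ZFSet), (a : ZFSet)}, hcl _ _ a.2 a.2⟩,
      ⟨{(a : ZFSet), (b : ZFSet)}, hcl _ _ a.2 b.2⟩, ?_, ?_, ?_⟩
    · rw [uPairS_cl hM]
      show (p : ZFSet) = {({(a : ZFSet), (a : ZFSet)} : ZFSet), {(a : ZFSet), (b : ZFSet)}}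
      rw [hp, ZFSet.pair, upair_self]
    · rw [uPairS_cl hM]
    · rw [uPairS_cl hM]

theorem pMemS_cl (hM : ClassTransitive M)
    (hcl : ∀ a b : ZFSet, a ∈ M → b ∈ M → ({a, b} : ZFSet) ∈ M) {x y E : M} :
    pMemS x y E ↔ ZFSet.pair (x : ZFSet) (y : ZFSet) ∈ (E : ZFSet) := by
  have hpairM : ZFSet.pair (x : ZFSet) (y : ZFSet) ∈ M := by
    have h1 := hcl _ _ x.2 x.2
    rw [upair_self] at h1
    have h2 := hcl _ _ x.2 y.2
    show ({({(x : ZFSet)} : ZFSet), {(x : ZFSet), (y : ZFSet)}} : ZFSet) ∈ M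
    exact hcl _ _ h1 h2
  constructor
  · rintro ⟨s, hs, hk⟩
    rw [kPairS_cl hM hcl] at hk
    rw [← hk]
    exact memS_cl.1 hs
  · intro h
    exact ⟨⟨ZFSet.pair (x : ZFSet) (y : ZFSet), hpairM⟩, memS_cl.2 h, (kPairS_cl hM hcl).2 rfl⟩

theorem ordS_cl (hM : ClassTransitive M) {x : M} (h : ordS x) : IsOrd (x : ZFSet) := by
  constructor
  · intro y hy z hz
    exact h.1 ⟨y, hM x x.2 y hy⟩ ⟨z, hM y (hM x x.2 y hy) z hz⟩ (memS_cl.2 hy) (memS_cl.2 hz)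
  · intro y hy
    have hyM : y ∈ M := hM x x.2 y hy
    intro z hz w hw
    have hzM : z ∈ M := hM y hyM z hz
    have hwM : w ∈ M := hM z hzM w hw
    exact h.2 ⟨y, hyM⟩ (memS_cl.2 hy) ⟨z, hzM⟩ ⟨w, hwM⟩ (memS_cl.2 hz) (memS_cl.2 hw)

theorem graphS_cl (hM : ClassTransitive M)
    (hcl : ∀ a b : ZFSet, a ∈ M → b ∈ M → ({a, b} : ZFSet) ∈ M) {gv ge : M}
    (h : graphS gv ge) : IsGraph (gv : ZFSet) (ge : ZFSet) := by
  intro z hz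
  obtain ⟨x, y, h1, h2, h3⟩ := h ⟨z, hM ge ge.2 z hz⟩ (memS_cl.2 hz)
  exact ⟨↑x, memS_cl.1 h1, ↑y, memS_cl.1 h2, (kPairS_cl hM hcl).1 h3⟩

end Bridge
section Transfer

variable {M : Set ZFSet} {j : ZFSet → ZFSet}

theorem elem_mem (hj : Elementary M j) {x y : ZFSet} : x ∈ y ↔ j x ∈ j y := by
  obtain ⟨hjm, he⟩ := hj
  have h := he 2 memF ![x, y]
  rw [realize_memF, realize_memF] at h
  simpa [memS_zf, memS_cl] using h

theorem elem_upaircl (hj : Elementary M j) (hM : ClassTransitive M) :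
    ∀ a b : ZFSet, a ∈ M → b ∈ M → ({a, b} : ZFSet) ∈ M := by
  obtain ⟨hjm, he⟩ := hj
  have h := he 0 upairclF (fun i => i.elim0)
  rw [realize_upairclF, realize_upairclF] at h
  have hV : ∀ a b : ZFSet, ∃ p : ZFSet, uPairS p a b := fun a b => ⟨{a, b}, uPairS_zf.2 rfl⟩
  intro a b ha hb
  obtain ⟨p, hp⟩ := h.1 hV ⟨a, ha⟩ ⟨b, hb⟩
  have h2 := (uPairS_cl hM).1 hp
  rw [← h2]
  exact p.2

theorem elem_pair (hj : Elementary M j) (hM : ClassTransitive M)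
    (hcl : ∀ a b : ZFSet, a ∈ M → b ∈ M → ({a, b} : ZFSet) ∈ M) (a b : ZFSet) :
    j (ZFSet.pair a b) = ZFSet.pair (j a) (j b) := by
  obtain ⟨hjm, he⟩ := hj
  have h := he 3 kPairF ![ZFSet.pair a b, a, b]
  rw [realize_kPairF, realize_kPairF] at h
  have h2 := h.1 (kPairS_zf.2 (by simp))
  have h3 := (kPairS_cl hM hcl).1 h2
  simpa using h3

theorem elem_ord (hj : Elementary M j) (hM : ClassTransitive M) {x : ZFSet}
    (h : IsOrd x) : IsOrd (j x) := by
  obtain ⟨hjm, he⟩ := hj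
  have h1 := he 1 ordF ![x]
  rw [realize_ordF, realize_ordF] at h1
  have h2 := h1.1 (by simpa [ordS_zf] using h)
  simpa using ordS_cl hM h2

theorem elem_graph (hj : Elementary M j) (hM : ClassTransitive M)
    (hcl : ∀ a b : ZFSet, a ∈ M → b ∈ M → ({a, b} : ZFSet) ∈ M) {gv ge : ZFSet}
    (h : IsGraph gv ge) : IsGraph (j gv) (j ge) := by
  obtain ⟨hjm, he⟩ := hj
  have h1 := he 2 graphF ![gv, ge]
  rw [realize_graphF, realize_graphF] at h1
  have h2 := h1.1 (by simpa [graphS_zf] using h)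
  simpa using graphS_cl hM hcl h2

theorem elem_SF (hj : Elementary M j) {R : ZFSet} (h : SS R) (hRM : j R ∈ M) :
    SS (⟨j R, hRM⟩ : M) := by
  obtain ⟨hjm, he⟩ := hj
  have h1 := he 1 SF ![R]
  rw [realize_SF, realize_SF] at h1
  have h2 := h1.1 (by simpa using h)
  simpa using h2

theorem SS_Gres {gV gE : ZFSet → ZFSet} {β : ZFSet} (hβ : IsOrd β)
    (hBack : ∀ α α', IsOrd α → IsOrd α' → (α ∈ α' ∨ α = α') →
      GraphHom (gV α') (gE α') (gV α) (gE α)) :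
    SS (Gres gV gE β) := by
  intro p q a w gv ge a' w' gv' ge' hp hq k1 k2 k3 k4 hcond
  rw [memS_zf, Gres, ZFSet.mem_image] at hp hq
  rw [kPairS_zf] at k1 k2 k3 k4
  obtain ⟨A, hA, hPA⟩ := hp
  obtain ⟨A', hA', hQA⟩ := hq
  obtain ⟨rfl, hw⟩ := ZFSet.pair_injective (hPA.trans k1)
  obtain ⟨rfl, rfl⟩ := ZFSet.pair_injective (hw.trans k2)
  obtain ⟨rfl, hw'⟩ := ZFSet.pair_injective (hQA.trans k3)
  obtain ⟨rfl, rfl⟩ := ZFSet.pair_injective (hw'.trans k4)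
  rw [memS_zf] at hcond
  obtain ⟨g, hg1, hg2⟩ := hBack A' A (isOrd_of_mem hβ hA') (isOrd_of_mem hβ hA) hcond
  refine ⟨ZFSet.image (fun x => ZFSet.pair x (g x)) (gV A), fun x hx => ?_,
    fun x y u t h1 h2 h3 => ?_⟩
  · rw [memS_zf] at hx
    exact ⟨g x, memS_zf.2 (hg1 x hx), pMemS_zf.2 (ZFSet.mem_image.2 ⟨x, hx, rfl⟩)⟩
  · rw [pMemS_zf, ZFSet.mem_image] at h1 h2
    rw [pMemS_zf] at h3 ⊢
    obtain ⟨x0, hx0, he1⟩ := h1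
    obtain ⟨y0, hy0, he2⟩ := h2
    obtain ⟨rfl, rfl⟩ := ZFSet.pair_injective he1
    obtain ⟨rfl, rfl⟩ := ZFSet.pair_injective he2
    exact hg2 x0 y0 h3

end Transfer
/-- Suppose `κ` is a cardinal, `G = (gV, gE)` assigns a graph to each ordinal,
`j : V → M` is an elementary embedding into a transitive class with critical point
`κ`, and `j(G)(κ+1) = G(κ+1)` (i.e. the pair `⟨κ+1, G(κ+1)⟩` belongs to `j` of every
set-sized restriction of `G` to ordinals `β ∋ κ+1`). If for all ordinals `α ≤ α'`
there is a graph homomorphism `G(α') → G(α)`, then there is a graph homomorphism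
`G(κ) → G(κ+1)`, namely the composition of a homomorphism
`h : j(G)(j(κ)) = (j (gV κ), j (gE κ)) → G(κ+1)` with `j ↾ G(κ)`. -/
theorem hom_from_embedding (κ : ZFSet) (hκ : IsCard κ)
    (M : Set ZFSet) (hM : ClassTransitive M) (j : ZFSet → ZFSet) (hj : Elementary M j)
    (hcrit₁ : j κ ≠ κ) (hcrit₂ : ∀ α, IsOrd α → α ∈ κ → j α = α)
    (gV gE : ZFSet → ZFSet)
    (hGraph : ∀ α, IsOrd α → IsGraph (gV α) (gE α))
    (hCoh : ∀ β, IsOrd β → succZ κ ∈ β →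
      ZFSet.pair (succZ κ) (ZFSet.pair (gV (succZ κ)) (gE (succZ κ))) ∈ j (Gres gV gE β))
    (hBack : ∀ α α', IsOrd α → IsOrd α' → (α ∈ α' ∨ α = α') →
      GraphHom (gV α') (gE α') (gV α) (gE α)) :
    ∃ f : ZFSet → ZFSet,
      ((∀ x ∈ j (gV κ), f x ∈ gV (succZ κ)) ∧
        ∀ x y : ZFSet, ZFSet.pair x y ∈ j (gE κ) →
          ZFSet.pair (f x) (f y) ∈ gE (succZ κ)) ∧
      (∀ x ∈ gV κ, f (j x) ∈ gV (succZ κ)) ∧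
      ∀ x y : ZFSet, ZFSet.pair x y ∈ gE κ →
        ZFSet.pair (f (j x)) (f (j y)) ∈ gE (succZ κ) := by
  have hcl := elem_upaircl hj hM
  have hmem : ∀ x y : ZFSet, x ∈ y ↔ j x ∈ j y := fun x y => elem_mem hj
  have hjpair := elem_pair hj hM hcl
  obtain ⟨hjm, helem⟩ := hj
  have hj' : Elementary M j := ⟨hjm, helem⟩
  -- ordinal facts about the critical point
  have hordκ := hκ.1
  have hordjκ : IsOrd (j κ) := elem_ord hj' hM hordκ
  have hjκκ : j κ ∉ κ := by
    intro hin
    have h2 : j (j κ) = j κ := hcrit₂ (j κ) (isOrd_of_mem hordκ hin) hin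
    have h3 : j (j κ) ∈ j κ := (hmem (j κ) κ).1 hin
    rw [h2] at h3
    exact ZFSet.mem_irrefl _ h3
  have hsucc : succZ κ ∈ j κ ∨ succZ κ = j κ := by
    rcases ord_tri (succZ κ) (isOrd_succZ hordκ) (j κ) hordjκ with h | h | h
    · exact Or.inl h
    · exact Or.inr h
    · rcases mem_succZ.1 h with h' | h'
      · exact absurd h' hcrit₁
      · exact absurd h' hjκκ
  -- the coherent restriction and its transfer
  have hordβ : IsOrd (succZ (succZ κ)) := isOrd_succZ (isOrd_succZ hordκ)
  have hSSM := elem_SF hj' (SS_Gres hordβ hBack) (hjm (Gres gV gE (succZ (succZ κ))))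
  -- the two relevant members of `j (Gres gV gE β)`
  have hPmem : ZFSet.pair κ (ZFSet.pair (gV κ) (gE κ)) ∈ Gres gV gE (succZ (succZ κ)) := by
    rw [Gres, ZFSet.mem_image]
    exact ⟨κ, mem_succZ.2 (Or.inr (mem_succZ.2 (Or.inl rfl))), rfl⟩
  have hjP : ZFSet.pair (j κ) (ZFSet.pair (j (gV κ)) (j (gE κ)))
      ∈ j (Gres gV gE (succZ (succZ κ))) := by
    have h := (hmem _ _).1 hPmem
    rwa [hjpair, hjpair] at h
  have hQmem := hCoh (succZ (succZ κ)) hordβ (mem_succZ.2 (Or.inl rfl))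
  -- membership in `M` of all the components
  have hsplit : ∀ x y : ZFSet, ZFSet.pair x y ∈ M → x ∈ M ∧ y ∈ M := by
    intro x y hxy
    have hx1 : ({x} : ZFSet) ∈ M :=
      hM _ hxy _ (show ({x} : ZFSet) ∈ ({{x}, {x, y}} : ZFSet) from ZFSet.mem_pair.2 (Or.inl rfl))
    have hx2 : ({x, y} : ZFSet) ∈ M :=
      hM _ hxy _ (show ({x, y} : ZFSet) ∈ ({{x}, {x, y}} : ZFSet) from ZFSet.mem_pair.2 (Or.inr rfl))
    exact ⟨hM _ hx1 x (ZFSet.mem_singleton.2 rfl), hM _ hx2 y (ZFSet.mem_pair.2 (Or.inr rfl))⟩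
  have hjResM : j (Gres gV gE (succZ (succZ κ))) ∈ M := hjm _
  have hPM : ZFSet.pair (j κ) (ZFSet.pair (j (gV κ)) (j (gE κ))) ∈ M := hM _ hjResM _ hjP
  have hQM : ZFSet.pair (succZ κ) (ZFSet.pair (gV (succZ κ)) (gE (succZ κ))) ∈ M :=
    hM _ hjResM _ hQmem
  have hQ1 := hsplit _ _ hQM
  have hQ2 := hsplit _ _ hQ1.2
  -- instantiate the transferred statement
  have happ := hSSM ⟨_, hPM⟩ ⟨_, hQM⟩ ⟨j κ, hjm κ⟩
    ⟨ZFSet.pair (j (gV κ)) (j (gE κ)), (hsplit _ _ hPM).2⟩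
    ⟨j (gV κ), hjm _⟩ ⟨j (gE κ), hjm _⟩
    ⟨succZ κ, hQ1.1⟩ ⟨ZFSet.pair (gV (succZ κ)) (gE (succZ κ)), hQ1.2⟩
    ⟨gV (succZ κ), hQ2.1⟩ ⟨gE (succZ κ), hQ2.2⟩
    (memS_cl.2 hjP) (memS_cl.2 hQmem)
    ((kPairS_cl hM hcl).2 rfl) ((kPairS_cl hM hcl).2 rfl)
    ((kPairS_cl hM hcl).2 rfl) ((kPairS_cl hM hcl).2 rfl)
    (by
      rcases hsucc with h | h
      · exact Or.inl (memS_cl.2 h)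
      · exact Or.inr (Subtype.ext h))
  obtain ⟨F, hvert, hedge⟩ := happ
  -- extract a set-level homomorphism
  have hvert' : ∀ x : ZFSet, x ∈ j (gV κ) →
      ∃ y, y ∈ gV (succZ κ) ∧ ZFSet.pair x y ∈ (F : ZFSet) := by
    intro x hx
    obtain ⟨y, hy1, hy2⟩ := hvert ⟨x, hM _ (hjm (gV κ)) x hx⟩ (memS_cl.2 hx)
    exact ⟨↑y, memS_cl.1 hy1, (pMemS_cl hM hcl).1 hy2⟩
  classical
  set f : ZFSet → ZFSet := fun x =>
    if h : ∃ y, ZFSet.pair x y ∈ (F : ZFSet) ∧ y ∈ gV (succZ κ) then h.choose else ∅ with hfdef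
  have hfspec : ∀ x, x ∈ j (gV κ) →
      ZFSet.pair x (f x) ∈ (F : ZFSet) ∧ f x ∈ gV (succZ κ) := by
    intro x hx
    obtain ⟨y, hy1, hy2⟩ := hvert' x hx
    have hex : ∃ y, ZFSet.pair x y ∈ (F : ZFSet) ∧ y ∈ gV (succZ κ) := ⟨y, hy2, hy1⟩
    have hfx : f x = hex.choose := dif_pos hex
    rw [hfx]
    exact hex.choose_spec
  have hedgeF : ∀ x y : ZFSet, ZFSet.pair x y ∈ j (gE κ) →
      ZFSet.pair (f x) (f y) ∈ gE (succZ κ) := by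
    intro x y hxy
    have hgr : IsGraph (j (gV κ)) (j (gE κ)) := elem_graph hj' hM hcl (hGraph κ hordκ)
    obtain ⟨x0, hx0, y0, hy0, heq⟩ := hgr _ hxy
    obtain ⟨rfl, rfl⟩ := ZFSet.pair_injective heq
    have h1 := hfspec x hx0
    have h2 := hfspec y hy0
    have hxM : x ∈ M := hM _ (hjm (gV κ)) _ hx0
    have hyM : y ∈ M := hM _ (hjm (gV κ)) _ hy0
    have hfxM : f x ∈ M := (hsplit _ _ (hM _ F.2 _ h1.1)).2
    have hfyM : f y ∈ M := (hsplit _ _ (hM _ F.2 _ h2.1)).2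
    have h3 := hedge ⟨x, hxM⟩ ⟨y, hyM⟩ ⟨f x, hfxM⟩ ⟨f y, hfyM⟩
      ((pMemS_cl hM hcl).2 h1.1) ((pMemS_cl hM hcl).2 h2.1)
      ((pMemS_cl hM hcl).2 hxy)
    exact (pMemS_cl hM hcl).1 h3
  refine ⟨f, ⟨fun x hx => (hfspec x hx).2, hedgeF⟩,
    fun x hx => (hfspec (j x) ((hmem x (gV κ)).1 hx)).2, fun x y hxy => ?_⟩
  have h : ZFSet.pair (j x) (j y) ∈ j (gE κ) := by
    rw [← hjpair]
    exact (hmem _ _).1 hxy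
  exact hedgeF _ _ h

end WVP
end

section
/- The membership relation ∈* on the term model M* is set-like: for every (k₂,b₂,f₂) ∈ M*, the collection of =*-equivalence classes [k₁,b₁,f₁] with (k₁,b₁,f₁) ∈* (k₂,b₂,f₂) forms a set. Specifically, every (k₁,b₁,f₁) ∈* (k₂,b₂,f₂) is =*-equivalent to (k₁,b₁,f̄₁) where f̄₁(a) = f₁(a) if f₁(a) ∈ ⋃ran(f₂) and f̄₁(a) = ∅ otherwise. -/
namespace WVP

attribute [local instance] Classical.propDecidable

/-- `tup X k`: the set of `k`-tuples (as lists) of elements of the ZF-set `X`. -/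
def tup (X : ZFSet) (k : ℕ) : Set (List ZFSet) := {l | l.length = k ∧ ∀ z ∈ l, z ∈ X}

/-- `finTup X`: the set of all finite tuples from `X`, i.e. `X^{<ω}`. -/
def finTup (X : ZFSet) : Set (List ZFSet) := {l | ∀ z ∈ l, z ∈ X}

/-- `WFset A`: `A` is well-founded under the reverse of the proper-initial-segment
relation, i.e. there is no infinite chain `a₁ ⊊ a₂ ⊊ ⋯` of elements of `A`. -/
def WFset (A : Set (List ZFSet)) : Prop :=
  ¬ ∃ g : ℕ → List ZFSet, (∀ n, g n ∈ A) ∧ ∀ n, g n <+: g (n + 1) ∧ g n ≠ g (n + 1)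

/-- The coordinate projection `(x₁,…,x_k) ↦ (x_{i₁},…,x_{i_j})` (0-based indices). -/
def proj (is : List ℕ) (l : List ZFSet) : List ZFSet := is.map fun i => l.getD i ∅

/-- The inverse image operator `Proj⁻¹_{k,(i₁,…,i_j)}` of the coordinate projection
`proj is : X^k → X^j`, mapping subsets of `X^j` to subsets of `X^k`. -/
def ProjInv (X : ZFSet) (k : ℕ) (is : List ℕ) (A : Set (List ZFSet)) : Set (List ZFSet) :=
  {l | l ∈ tup X k ∧ proj is l ∈ A}

/-- The bounded projection operator `BP_k` on subsets of `X^{k+1}`: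
`BP_k(A) = {(x₁,…,x_{k+1}) ∈ X^{k+1} : ∃ z ∈ x_{k+1}, (x₁,…,x_k,z) ∈ A}`. -/
def BP (X : ZFSet) (k : ℕ) (A : Set (List ZFSet)) : Set (List ZFSet) :=
  {l | l ∈ tup X (k + 1) ∧ ∃ z, z ∈ l.getLastD ∅ ∧ l.dropLast ++ [z] ∈ A}

/-- A homomorphism of 𝒫-structures `𝒫_X → 𝒫_Y`: a Boolean algebra homomorphism
`𝒫(X^{<ω}) → 𝒫(Y^{<ω})` sending `X^k` to `Y^k`, preserving the well-foundedness
predicate `WF` (forward direction), and commuting with the inverse-projection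
operators `Proj⁻¹` and the bounded projection operators `BP_k`. -/
structure IsPHom (X Y : ZFSet) (h : Set (List ZFSet) → Set (List ZFSet)) : Prop where
  subset_finTup : ∀ A ⊆ finTup X, h A ⊆ finTup Y
  map_inter : ∀ A ⊆ finTup X, ∀ B ⊆ finTup X, h (A ∩ B) = h A ∩ h B
  map_compl : ∀ A ⊆ finTup X, h (finTup X \ A) = finTup Y \ h A
  map_const : ∀ k, h (tup X k) = tup Y k
  map_wf : ∀ A ⊆ finTup X, WFset A → WFset (h A)
  map_projInv : ∀ (j k : ℕ) (is : List ℕ), is.length = j → (∀ i ∈ is, i < k) →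
    ∀ A ⊆ tup X j, h (ProjInv X k is A) = ProjInv Y k is (h A)
  map_bp : ∀ (k : ℕ), ∀ A ⊆ tup X (k + 1), h (BP X k A) = BP Y k (h A)

/-- The term model `M*`: triples `(k, b, f)` with `b ∈ Y^k` and `f : X^k → V`
(represented as a total function on tuples, only its values on `X^k` matter). -/
structure MStar (X Y : ZFSet) where
  k : ℕ
  b : List ZFSet
  hb : b ∈ tup Y k
  f : List ZFSet → ZFSet

/-- The membership relation `∈*` of the term model:
`(k₁,b₁,f₁) ∈* (k₂,b₂,f₂)` iff `b₁b₂ ∈ h({a₁a₂ : f₁(a₁) ∈ f₂(a₂)})`. -/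
def memStar (X Y : ZFSet) (h : Set (List ZFSet) → Set (List ZFSet))
    (p q : MStar X Y) : Prop :=
  p.b ++ q.b ∈ h {l | ∃ a₁ ∈ tup X p.k, ∃ a₂ ∈ tup X q.k, l = a₁ ++ a₂ ∧ p.f a₁ ∈ q.f a₂}

/-- The equality relation `=*` of the term model:
`(k₁,b₁,f₁) =* (k₂,b₂,f₂)` iff `b₁b₂ ∈ h({a₁a₂ : f₁(a₁) = f₂(a₂)})`. -/
def eqStar (X Y : ZFSet) (h : Set (List ZFSet) → Set (List ZFSet))
    (p q : MStar X Y) : Prop :=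
  p.b ++ q.b ∈ h {l | ∃ a₁ ∈ tup X p.k, ∃ a₂ ∈ tup X q.k, l = a₁ ++ a₂ ∧ p.f a₁ = q.f a₂}

/-- "Łoś's theorem holds" for (the interpretations of) an `n`-ary formula, where `P`
is its interpretation in `V` and `Q` its interpretation in the term model `M*`:
for all `(k₁,b₁,f₁),…,(kₙ,bₙ,fₙ)` in `M*`,
`M* ⊨ φ[(k₁,b₁,f₁),…,(kₙ,bₙ,fₙ)]` iff `b₁⋯bₙ ∈ h({a₁⋯aₙ : V ⊨ φ[f₁(a₁),…,fₙ(aₙ)]})`. -/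
def LosHolds (X Y : ZFSet) (h : Set (List ZFSet) → Set (List ZFSet)) (n : ℕ)
    (P : (Fin n → ZFSet) → Prop) (Q : (Fin n → MStar X Y) → Prop) : Prop :=
  ∀ t : Fin n → MStar X Y,
    Q t ↔ (List.ofFn fun i => (t i).b).flatten ∈
      h {l | ∃ a : Fin n → List ZFSet, (∀ i, a i ∈ tup X (t i).k) ∧
        l = (List.ofFn a).flatten ∧ P fun i => (t i).f (a i)}

lemma hMono {X Y : ZFSet} {h : Set (List ZFSet) → Set (List ZFSet)} (hh : IsPHom X Y h)
    {A B : Set (List ZFSet)} (hAB : A ⊆ B) (hB : B ⊆ finTup X) : h A ⊆ h B := by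
  have hA : A ⊆ finTup X := hAB.trans hB
  have hi : h (A ∩ B) = h A ∩ h B := hh.map_inter A hA B hB
  rw [Set.inter_eq_self_of_subset_left hAB] at hi
  rw [hi]; exact Set.inter_subset_right

lemma tup_subset_finTup (X : ZFSet) (k : ℕ) : tup X k ⊆ finTup X := fun _ hl => hl.2

lemma proj_range {l : List ZFSet} {k : ℕ} (hl : l.length = k) :
    proj (List.range k) l = l := by
  subst hl
  apply List.ext_getElem
  · simp [proj]
  · intro i h1 h2
    simp only [proj, List.getElem_map, List.getElem_range]
    exact List.getD_eq_getElem l ∅ h2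

lemma proj_range_append {l₁ l₂ : List ZFSet} {k : ℕ} (hl : l₁.length = k) :
    proj (List.range k) (l₁ ++ l₂) = l₁ := by
  subst hl
  apply List.ext_getElem
  · simp [proj]
  · intro i h1 h2
    simp only [proj, List.getElem_map, List.getElem_range]
    rw [List.getD_eq_getElem (l₁ ++ l₂) ∅ (by simp; omega)]
    exact List.getElem_append_left h2

lemma proj_append (is₁ is₂ : List ℕ) (l : List ZFSet) :
    proj (is₁ ++ is₂) l = proj is₁ l ++ proj is₂ l := by
  simp [proj]

/-- The membership relation `∈*` of the term model `M*` is set-like: every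
`∈*`-predecessor `(k₁,b₁,f₁)` of `(k₂,b₂,f₂)` is `=*`-equivalent to `(k₁,b₁,f̄₁)`,
where `f̄₁(a) = f₁(a)` if `f₁(a) ∈ ⋃ran(f₂)` and `f̄₁(a) = ∅` otherwise; hence the
`∈*`-predecessors of `(k₂,b₂,f₂)` are represented, up to `=*`, by triples whose
third components take values in the fixed set `⋃ran(f₂) ∪ {∅}`. -/
theorem memStar_setLike (X Y : ZFSet) (h : Set (List ZFSet) → Set (List ZFSet))
    (hh : IsPHom X Y h) (p q : MStar X Y) (hpq : memStar X Y h p q) :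
    eqStar X Y h p
      ⟨p.k, p.b, p.hb, fun a =>
        if ∃ a₂ ∈ tup X q.k, p.f a ∈ q.f a₂ then p.f a else ∅⟩ ∧
    ∃ p' : MStar X Y, p'.k = p.k ∧ p'.b = p.b ∧
      (∀ a, p'.f a = ∅ ∨ ∃ a₂ ∈ tup X q.k, p'.f a ∈ q.f a₂) ∧
      eqStar X Y h p p' := by
  set fbar : List ZFSet → ZFSet :=
    fun a => if ∃ a₂ ∈ tup X q.k, p.f a ∈ q.f a₂ then p.f a else ∅ with hfbar
  -- The set B of tuples where f₁ and f̄₁ agree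
  set B : Set (List ZFSet) := {a | a ∈ tup X p.k ∧ p.f a = fbar a} with hBdef
  have hBsub : B ⊆ tup X p.k := fun a ha => ha.1
  -- The membership set A
  set A : Set (List ZFSet) :=
    {l | ∃ a₁ ∈ tup X p.k, ∃ a₂ ∈ tup X q.k, l = a₁ ++ a₂ ∧ p.f a₁ ∈ q.f a₂} with hAdef
  -- The equality set E (for eqStar p p')
  set E : Set (List ZFSet) :=
    {l | ∃ a₁ ∈ tup X p.k, ∃ a₂ ∈ tup X p.k, l = a₁ ++ a₂ ∧ p.f a₁ = fbar a₂} with hEdef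
  have hEsub : E ⊆ tup X (p.k + p.k) := by
    rintro l ⟨a₁, ha₁, a₂, ha₂, rfl, -⟩
    refine ⟨by simp [ha₁.1, ha₂.1], ?_⟩
    intro z hz
    rcases List.mem_append.1 hz with hz | hz
    · exact ha₁.2 z hz
    · exact ha₂.2 z hz
  -- Step 1: A ⊆ ProjInv X (p.k + q.k) (range p.k) B
  have hA1 : A ⊆ ProjInv X (p.k + q.k) (List.range p.k) B := by
    rintro l ⟨a₁, ha₁, a₂, ha₂, rfl, hmem⟩
    constructor
    · refine ⟨by simp [ha₁.1, ha₂.1], ?_⟩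
      intro z hz
      rcases List.mem_append.1 hz with hz | hz
      · exact ha₁.2 z hz
      · exact ha₂.2 z hz
    · rw [proj_range_append ha₁.1]
      refine ⟨ha₁, ?_⟩
      rw [hfbar]
      exact (if_pos ⟨a₂, ha₂, hmem⟩).symm
  -- Step 2: b₁ ∈ h B
  have hproj1 : h (ProjInv X (p.k + q.k) (List.range p.k) B)
      = ProjInv Y (p.k + q.k) (List.range p.k) (h B) :=
    hh.map_projInv p.k (p.k + q.k) (List.range p.k) (by simp)
      (fun i hi => lt_of_lt_of_le (List.mem_range.1 hi) (Nat.le_add_right _ _)) B hBsub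
  have hPIsub : ProjInv X (p.k + q.k) (List.range p.k) B ⊆ finTup X :=
    fun l hl => (tup_subset_finTup X _) hl.1
  have hbq : p.b ++ q.b ∈ ProjInv Y (p.k + q.k) (List.range p.k) (h B) := by
    rw [← hproj1]
    exact hMono hh hA1 hPIsub hpq
  have hb1 : p.b ∈ h B := by
    have := hbq.2
    rwa [proj_range_append p.hb.1] at this
  -- Step 3: B ⊆ ProjInv X p.k (range p.k ++ range p.k) E
  have hB2 : B ⊆ ProjInv X p.k (List.range p.k ++ List.range p.k) E := by
    rintro a ⟨ha, heq⟩
    refine ⟨ha, ?_⟩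
    rw [proj_append, proj_range ha.1]
    exact ⟨a, ha, a, ha, rfl, heq⟩
  have hproj2 : h (ProjInv X p.k (List.range p.k ++ List.range p.k) E)
      = ProjInv Y p.k (List.range p.k ++ List.range p.k) (h E) :=
    hh.map_projInv (p.k + p.k) p.k (List.range p.k ++ List.range p.k) (by simp)
      (fun i hi => by
        rcases List.mem_append.1 hi with hi | hi <;> exact List.mem_range.1 hi) E hEsub
  have hb2 : p.b ∈ ProjInv Y p.k (List.range p.k ++ List.range p.k) (h E) := by
    rw [← hproj2]
    exact hMono hh hB2 (fun l hl => (tup_subset_finTup X _) hl.1) hb1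
  have key : p.b ++ p.b ∈ h E := by
    have := hb2.2
    rwa [proj_append, proj_range p.hb.1] at this
  have heq : eqStar X Y h p ⟨p.k, p.b, p.hb, fbar⟩ := key
  exact ⟨heq, ⟨p.k, p.b, p.hb, fbar⟩, rfl, rfl,
    fun a => by
      rw [hfbar]
      by_cases hc : ∃ a₂ ∈ tup X q.k, p.f a ∈ q.f a₂
      · right
        simp only [if_pos hc]
        exact hc
      · left
        simp only [if_neg hc],
    heq⟩

end WVP
end
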